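/- Schur's inequality: for any positive semidefinite matrix A ∈ M_n(ℂ), any finite subgroup G ≤ S_n, and any irreducible character χ of G, (1/χ(e)) d^G_χ(A) ≥ det(A). -/

import Mathlib

open CategoryTheory
open scoped ComplexOrder

namespace SchurAux

open Matrix

variable {n : ℕ}

/-- The sesquilinear form underlying the generalized matrix function. -/
noncomputable def Phi (G : Subgroup (Equiv.Perm (Fin n))) [Fintype G] (χ : G → ℂ)
    (u v : (Fin n → Fin n) → ℂ) : ℂ :=
  ∑ σ : G, χ σ * ∑ f : Fin n → Fin n,
    star (u f) * v (f ∘ ⇑((σ : Equiv.Perm (Fin n))⁻¹))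

lemma sum_comp_perm (π : Equiv.Perm (Fin n)) (Ψ : (Fin n → Fin n) → ℂ) :
    ∑ f : Fin n → Fin n, Ψ (f ∘ ⇑π) = ∑ f : Fin n → Fin n, Ψ f := by
  apply Fintype.sum_bijective (fun f : Fin n → Fin n => f ∘ ⇑π)
  · constructor
    · intro a b h
      funext x
      simpa using congrFun h (π⁻¹ x)
    · intro g
      exact ⟨g ∘ ⇑π⁻¹, by funext x; simp⟩
  · intro f; rfl

lemma sum_inv_group {G : Type*} [Group G] [Fintype G] (φ : G → ℂ) :
    ∑ σ : G, φ σ⁻¹ = ∑ σ : G, φ σ :=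
  Fintype.sum_equiv (Equiv.inv G) _ _ (fun _ => rfl)

lemma sum_swap3 {γ δ ε : Type*} [Fintype γ] [Fintype δ] [Fintype ε] (H : γ → δ → ε → ℂ) :
    ∑ c : γ, ∑ d : δ, ∑ e : ε, H c d e = ∑ d : δ, ∑ e : ε, ∑ c : γ, H c d e := by
  rw [Finset.sum_comm]
  exact Finset.sum_congr rfl fun d _ => Finset.sum_comm

/-- Expansion of the product `∏ i, A i (σ i)` when `A = Bᴴ * B`. -/
lemma prod_expand {A B : Matrix (Fin n) (Fin n) ℂ} (hAB : A = Bᴴ * B)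
    (σ : Equiv.Perm (Fin n)) :
    ∏ i, A i (σ i)
      = ∑ f : Fin n → Fin n,
          star (∏ i, B (f i) i) * ∏ i, B ((f ∘ ⇑σ⁻¹) i) i := by
  have h1 : ∀ i j, A i j = ∑ k, star (B k i) * B k j := by
    intro i j
    rw [hAB]
    simp [Matrix.mul_apply, Matrix.conjTranspose_apply]
  calc ∏ i, A i (σ i) = ∏ i, ∑ k, star (B k i) * B k (σ i) := by
        exact Finset.prod_congr rfl fun i _ => h1 i (σ i)
    _ = ∑ f ∈ Fintype.piFinset (fun _ : Fin n => (Finset.univ : Finset (Fin n))),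
          ∏ i, star (B (f i) i) * B (f i) (σ i) :=
        Finset.prod_univ_sum _ _
    _ = ∑ f : Fin n → Fin n,
          star (∏ i, B (f i) i) * ∏ i, B ((f ∘ ⇑σ⁻¹) i) i := by
        rw [Fintype.piFinset_univ]
        refine Finset.sum_congr rfl fun f _ => ?_
        rw [Finset.prod_mul_distrib, star_prod]
        congr 1
        rw [← Equiv.prod_comp σ⁻¹ (fun i => B (f i) (σ i))]
        exact Finset.prod_congr rfl fun i _ => by simp

/-- Positivity of the diagonal of the form `Phi` for a unitary representation `N`. -/
lemma phi_nonneg (G : Subgroup (Equiv.Perm (Fin n))) [Fintype G] {m : ℕ}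
    (N : G → Matrix (Fin m) (Fin m) ℂ)
    (hmul : ∀ g h : G, N (g * h) = N g * N h)
    (hinv : ∀ g : G, N g⁻¹ = (N g)ᴴ)
    (s : (Fin n → Fin n) → ℂ) :
    0 ≤ Phi G (fun g => (N g).trace) s s := by
  classical
  set y : Fin m → Fin m × (Fin n → Fin n) → ℂ :=
    fun k p => ∑ σ : G, star (N σ p.1 k) * s (p.2 ∘ ⇑(σ : Equiv.Perm (Fin n))) with hy
  have key : ∑ k : Fin m, ∑ p : Fin m × (Fin n → Fin n), star (y k p) * y k p
      = (Fintype.card G : ℂ) * Phi G (fun g => (N g).trace) s s := by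
    calc ∑ k : Fin m, ∑ p : Fin m × (Fin n → Fin n), star (y k p) * y k p
        = ∑ k : Fin m, ∑ l : Fin m, ∑ f : Fin n → Fin n,
            ∑ τ : G, ∑ σ : G,
              (N τ l k * star (s (f ∘ ⇑(τ : Equiv.Perm (Fin n))))) *
              (star (N σ l k) * s (f ∘ ⇑(σ : Equiv.Perm (Fin n)))) := by
          refine Finset.sum_congr rfl fun k _ => ?_
          rw [Fintype.sum_prod_type]
          refine Finset.sum_congr rfl fun l _ => Finset.sum_congr rfl fun f _ => ?_
          have hstar : star (y k (l, f))
              = ∑ τ : G, N τ l k * star (s (f ∘ ⇑(τ : Equiv.Perm (Fin n)))) := by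
            simp [hy, star_sum, star_mul']
          rw [hstar, hy]
          rw [Finset.sum_mul_sum]
      _ = ∑ τ : G, ∑ σ : G, ∑ k : Fin m, ∑ l : Fin m, ∑ f : Fin n → Fin n,
              (N τ l k * star (s (f ∘ ⇑(τ : Equiv.Perm (Fin n))))) *
              (star (N σ l k) * s (f ∘ ⇑(σ : Equiv.Perm (Fin n)))) := by
          refine Eq.trans (Finset.sum_congr rfl fun k _ => Finset.sum_congr rfl fun l _ =>
            sum_swap3 _) ?_
          refine Eq.trans (Finset.sum_congr rfl fun k _ => sum_swap3 _) ?_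
          exact sum_swap3 _
      _ = ∑ τ : G, ∑ σ : G,
            (∑ k : Fin m, ∑ l : Fin m, star (N σ l k) * N τ l k) *
            (∑ f : Fin n → Fin n, star (s (f ∘ ⇑(τ : Equiv.Perm (Fin n)))) *
              s (f ∘ ⇑(σ : Equiv.Perm (Fin n)))) := by
          refine Finset.sum_congr rfl fun τ _ => Finset.sum_congr rfl fun σ _ => ?_
          simp only [Finset.sum_mul, Finset.mul_sum]
          refine Eq.trans ?_ (sum_swap3 fun f k l =>
            star (N σ l k) * N τ l k *
              (star (s (f ∘ ⇑(τ : Equiv.Perm (Fin n)))) * s (f ∘ ⇑(σ : Equiv.Perm (Fin n))))).symm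
          exact Finset.sum_congr rfl fun k _ => Finset.sum_congr rfl fun l _ =>
            Finset.sum_congr rfl fun f _ => by ring
      _ = ∑ τ : G, ∑ σ : G,
            (N (σ⁻¹ * τ)).trace *
            ∑ f : Fin n → Fin n, star (s f) * s (f ∘ ⇑((τ⁻¹ * σ : G) : Equiv.Perm (Fin n))) := by
          refine Finset.sum_congr rfl fun τ _ => Finset.sum_congr rfl fun σ _ => ?_
          have ha : ∑ k : Fin m, ∑ l : Fin m, star (N σ l k) * N τ l k
              = (N (σ⁻¹ * τ)).trace := by
            calc ∑ k : Fin m, ∑ l : Fin m, star (N σ l k) * N τ l k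
                = ∑ k : Fin m, ∑ l : Fin m, N σ⁻¹ k l * N τ l k := by
                  refine Finset.sum_congr rfl fun k _ => Finset.sum_congr rfl fun l _ => ?_
                  rw [hinv σ, Matrix.conjTranspose_apply]
              _ = (N σ⁻¹ * N τ).trace := by
                  simp [Matrix.trace, Matrix.mul_apply, Matrix.diag]
              _ = (N (σ⁻¹ * τ)).trace := by rw [hmul]
          have hb : ∑ f : Fin n → Fin n,
                star (s (f ∘ ⇑(τ : Equiv.Perm (Fin n)))) * s (f ∘ ⇑(σ : Equiv.Perm (Fin n)))
              = ∑ f : Fin n → Fin n,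
                star (s f) * s (f ∘ ⇑((τ⁻¹ * σ : G) : Equiv.Perm (Fin n))) := by
            rw [← sum_comp_perm ((τ : Equiv.Perm (Fin n)))
              (fun f => star (s f) * s (f ∘ ⇑((τ⁻¹ * σ : G) : Equiv.Perm (Fin n))))]
            refine Finset.sum_congr rfl fun f _ => ?_
            congr 2
            funext x
            simp [Function.comp, Equiv.Perm.mul_apply]
          rw [ha, hb]
      _ = ∑ τ : G, ∑ ρ : G, (N ρ⁻¹).trace *
            ∑ f : Fin n → Fin n, star (s f) * s (f ∘ ⇑((ρ : G) : Equiv.Perm (Fin n))) := by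
          refine Finset.sum_congr rfl fun τ _ => ?_
          refine (Fintype.sum_equiv (Equiv.mulLeft τ) _ _ ?_).symm
          intro ρ
          simp [mul_assoc]
      _ = (Fintype.card G : ℂ) * Phi G (fun g => (N g).trace) s s := by
          rw [Finset.sum_const, Finset.card_univ, nsmul_eq_mul]
          congr 1
          rw [Phi, ← sum_inv_group (fun ρ : G => (N ρ⁻¹).trace *
            ∑ f : Fin n → Fin n, star (s f) * s (f ∘ ⇑((ρ : G) : Equiv.Perm (Fin n))))]
          refine Finset.sum_congr rfl fun σ _ => ?_
          simp
  have hR : 0 ≤ ∑ k : Fin m, ∑ p : Fin m × (Fin n → Fin n), star (y k p) * y k p :=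
    Finset.sum_nonneg fun k _ => Finset.sum_nonneg fun p _ => star_mul_self_nonneg _
  have hc0 : ((Fintype.card G : ℂ)) ≠ 0 := by
    exact_mod_cast (Nat.cast_ne_zero (R := ℂ)).mpr Fintype.card_ne_zero
  have hinvnn : 0 ≤ ((Fintype.card G : ℂ))⁻¹ := by
    have h1 : ((Fintype.card G : ℂ)) = (((Fintype.card G : ℝ)) : ℂ) := by norm_cast
    rw [h1, ← Complex.ofReal_inv]
    exact Complex.zero_le_real.mpr (by positivity)
  have := mul_nonneg hinvnn (key ▸ hR)
  rwa [← mul_assoc, inv_mul_cancel₀ hc0, one_mul] at this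

lemma Phi_add_left (G : Subgroup (Equiv.Perm (Fin n))) [Fintype G] (χ : G → ℂ)
    (u u' v : (Fin n → Fin n) → ℂ) :
    Phi G χ (u + u') v = Phi G χ u v + Phi G χ u' v := by
  simp only [Phi, Pi.add_apply, star_add, add_mul, mul_add, Finset.sum_add_distrib]

lemma Phi_add_right (G : Subgroup (Equiv.Perm (Fin n))) [Fintype G] (χ : G → ℂ)
    (u v v' : (Fin n → Fin n) → ℂ) :
    Phi G χ u (v + v') = Phi G χ u v + Phi G χ u v' := by
  simp only [Phi, Pi.add_apply, star_add, add_mul, mul_add, Finset.sum_add_distrib]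

lemma exists_unitary {G : Type} [Group G] [Fintype G] (V : FDRep ℂ G) :
    ∃ N : G → Matrix (Fin (Module.finrank ℂ V)) (Fin (Module.finrank ℂ V)) ℂ,
      (∀ g h : G, N (g * h) = N g * N h) ∧
      (∀ g : G, N g⁻¹ = (N g)ᴴ) ∧
      (∀ g : G, (N g).trace = V.character g) := by
  classical
  set b := Module.finBasis ℂ V with hb
  set M : G → Matrix (Fin (Module.finrank ℂ V)) (Fin (Module.finrank ℂ V)) ℂ :=
    fun g => LinearMap.toMatrix b b (V.ρ g) with hM
  have hMmul : ∀ g h : G, M (g * h) = M g * M h := by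
    intro g h
    rw [hM]
    simp only [_root_.map_mul]
    exact LinearMap.toMatrix_mul b (V.ρ g) (V.ρ h)
  have hM1 : M 1 = 1 := by
    rw [hM]; simp only [_root_.map_one]; exact LinearMap.toMatrix_one b
  have hMtr : ∀ g : G, (M g).trace = V.character g := by
    intro g
    exact (LinearMap.trace_eq_matrix_trace ℂ b (V.ρ g)).symm
  set Q : Matrix (Fin (Module.finrank ℂ V)) (Fin (Module.finrank ℂ V)) ℂ :=
    ∑ g : G, (M g)ᴴ * M g with hQ
  have hQpos : Q.PosDef := by
    rw [hQ, ← Finset.add_sum_erase Finset.univ _ (Finset.mem_univ (1 : G))]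
    refine Matrix.PosDef.add_posSemidef ?_ ?_
    · rw [hM1]
      simpa using Matrix.PosDef.one (n := Fin (Module.finrank ℂ V)) (R := ℂ)
    · refine Finset.sum_induction _ _ (fun a b ha hb => ha.add hb) Matrix.PosSemidef.zero ?_
      intro g _
      exact Matrix.posSemidef_conjTranspose_mul_self (M g)
  have hQconj : ∀ h : G, (M h)ᴴ * Q * M h = Q := by
    intro h
    rw [hQ, Finset.mul_sum, Finset.sum_mul]
    refine Fintype.sum_equiv (Equiv.mulRight h) _ _ ?_
    intro g
    simp only [Equiv.coe_mulRight, hMmul, Matrix.conjTranspose_mul, Matrix.mul_assoc]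
  obtain ⟨C, hC⟩ : ∃ C : Matrix (Fin (Module.finrank ℂ V)) (Fin (Module.finrank ℂ V)) ℂ, Q = Matrix.conjTranspose C * C := by
    open scoped MatrixOrder in exact CStarAlgebra.nonneg_iff_eq_star_mul_self.mp hQpos.posSemidef.nonneg
  have hdetC : IsUnit C.det := by
    have h1 : Q.det ≠ 0 := hQpos.det_pos.ne'
    rw [hC, Matrix.det_mul] at h1
    exact isUnit_iff_ne_zero.mpr (right_ne_zero_of_mul h1)
  refine ⟨fun g => C * M g * C⁻¹, ?_, ?_, ?_⟩
  · intro g h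
    show C * M (g * h) * C⁻¹ = (C * M g * C⁻¹) * (C * M h * C⁻¹)
    rw [hMmul]
    calc C * (M g * M h) * C⁻¹
        = C * M g * (C⁻¹ * C) * M h * C⁻¹ := by
          rw [Matrix.nonsing_inv_mul C hdetC]
          simp only [Matrix.mul_assoc, Matrix.one_mul]
      _ = C * M g * C⁻¹ * (C * M h * C⁻¹) := by simp only [Matrix.mul_assoc]
  · intro g
    show C * M g⁻¹ * C⁻¹ = (C * M g * C⁻¹)ᴴ
    have hunit : (C * M g * C⁻¹)ᴴ * (C * M g * C⁻¹) = 1 := by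
      have h1 : (C * M g * C⁻¹)ᴴ * (C * M g * C⁻¹)
          = (C⁻¹)ᴴ * ((M g)ᴴ * (Cᴴ * C) * M g) * C⁻¹ := by
        rw [Matrix.conjTranspose_mul, Matrix.conjTranspose_mul]
        simp only [Matrix.mul_assoc]
      rw [h1, ← hC, hQconj g, hC]
      calc (C⁻¹)ᴴ * (Cᴴ * C) * C⁻¹
          = (C * C⁻¹)ᴴ * (C * C⁻¹) := by
            rw [Matrix.conjTranspose_mul]
            simp only [Matrix.mul_assoc]
        _ = 1 := by rw [Matrix.mul_nonsing_inv C hdetC]; simp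
    have hinv1 : (C * M g * C⁻¹) * (C * M g⁻¹ * C⁻¹) = 1 := by
      calc (C * M g * C⁻¹) * (C * M g⁻¹ * C⁻¹)
          = C * M g * (C⁻¹ * C) * M g⁻¹ * C⁻¹ := by simp only [Matrix.mul_assoc]
        _ = C * (M g * M g⁻¹) * C⁻¹ := by
            rw [Matrix.nonsing_inv_mul C hdetC]
            simp only [Matrix.mul_assoc, Matrix.one_mul]
        _ = 1 := by
            rw [← hMmul, mul_inv_cancel, hM1, Matrix.mul_one,
              Matrix.mul_nonsing_inv C hdetC]
    calc C * M g⁻¹ * C⁻¹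
        = ((C * M g * C⁻¹)ᴴ * (C * M g * C⁻¹)) * (C * M g⁻¹ * C⁻¹) := by
          rw [hunit, Matrix.one_mul]
      _ = (C * M g * C⁻¹)ᴴ * ((C * M g * C⁻¹) * (C * M g⁻¹ * C⁻¹)) := by
          simp only [Matrix.mul_assoc]
      _ = (C * M g * C⁻¹)ᴴ := by rw [hinv1, Matrix.mul_one]
  · intro g
    show (C * M g * C⁻¹).trace = V.character g
    rw [Matrix.trace_mul_cycle, Matrix.nonsing_inv_mul C hdetC, Matrix.one_mul]
    exact hMtr g

lemma exists_triangular {A : Matrix (Fin n) (Fin n) ℂ} (hA : A.PosDef) :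
    ∃ B : Matrix (Fin n) (Fin n) ℂ, (∀ k i : Fin n, i < k → B k i = 0) ∧ A = Bᴴ * B := by
  letI : DecidableEq (Fin n) := LinearOrder.toDecidableEq
  set W := @LDL.lowerInv ℂ _ (Fin n) Fin.instLinearOrder (inferInstance : WellFoundedLT (Fin n)) (inferInstance : LocallyFiniteOrderBot (Fin n)) A _ hA with hW
  haveI : Invertible W := @LDL.invertibleLowerInv ℂ _ (Fin n) Fin.instLinearOrder (inferInstance : WellFoundedLT (Fin n)) (inferInstance : LocallyFiniteOrderBot (Fin n)) A _ hA
  set d := @LDL.diagEntries ℂ _ (Fin n) Fin.instLinearOrder (inferInstance : WellFoundedLT (Fin n)) (inferInstance : LocallyFiniteOrderBot (Fin n)) A _ hA with hd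
  have hdiag : Matrix.diagonal d = W * A * Wᴴ :=
    @LDL.diag_eq_lowerInv_conj ℂ _ (Fin n) Fin.instLinearOrder (inferInstance : WellFoundedLT (Fin n)) (inferInstance : LocallyFiniteOrderBot (Fin n)) A _ hA
  have hd_nonneg : ∀ i, 0 ≤ d i := by
    have hpsd : (W * A * Wᴴ).PosSemidef := hA.posSemidef.mul_mul_conjTranspose_same W
    rw [← hdiag] at hpsd
    exact fun i => posSemidef_diagonal_iff.mp hpsd i
  set r : Fin n → ℝ := fun i => Real.sqrt ((d i).re) with hrdef
  have hr : ∀ i, (r i : ℂ) * (r i : ℂ) = d i := by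
    intro i
    have h0 := (Complex.le_def).mp (hd_nonneg i)
    simp only [Complex.zero_re, Complex.zero_im] at h0
    rw [hrdef, ← Complex.ofReal_mul, Real.mul_self_sqrt h0.1]
    exact Complex.ext (by simp) (by simp [h0.2.symm])
  have hWtri : W.BlockTriangular ⇑OrderDual.toDual := by
    intro i j hij
    exact @LDL.lowerInv_triangular ℂ _ (Fin n) Fin.instLinearOrder (inferInstance : WellFoundedLT (Fin n)) (inferInstance : LocallyFiniteOrderBot (Fin n)) A _ hA _ _ (OrderDual.toDual_lt_toDual.mp hij)
  have hWinvtri : W⁻¹.BlockTriangular ⇑OrderDual.toDual :=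
    Matrix.blockTriangular_inv_of_blockTriangular hWtri
  refine ⟨Matrix.diagonal (fun i => (r i : ℂ)) * (W⁻¹)ᴴ, ?_, ?_⟩
  · intro k i hik
    rw [Matrix.diagonal_mul, Matrix.conjTranspose_apply, hWinvtri (OrderDual.toDual_lt_toDual.mpr hik),
      star_zero, mul_zero]
  · have h1 : (Matrix.diagonal (fun i => (r i : ℂ)) * (W⁻¹)ᴴ)ᴴ *
        (Matrix.diagonal (fun i => (r i : ℂ)) * (W⁻¹)ᴴ)
        = W⁻¹ * Matrix.diagonal d * (W⁻¹)ᴴ := by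
      rw [Matrix.conjTranspose_mul, Matrix.conjTranspose_conjTranspose,
        Matrix.diagonal_conjTranspose]
      have hdiagr : Matrix.diagonal (star ∘ fun i => (r i : ℂ)) *
          Matrix.diagonal (fun i => (r i : ℂ)) = Matrix.diagonal d := by
        rw [Matrix.diagonal_mul_diagonal]
        refine congrArg Matrix.diagonal (funext fun i => ?_)
        simp only [Function.comp_apply, Complex.star_def, Complex.conj_ofReal]
        exact hr i
      calc W⁻¹ * Matrix.diagonal (star ∘ fun i => (r i : ℂ)) *
            (Matrix.diagonal (fun i => (r i : ℂ)) * (W⁻¹)ᴴ)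
          = W⁻¹ * (Matrix.diagonal (star ∘ fun i => (r i : ℂ)) *
              Matrix.diagonal (fun i => (r i : ℂ))) * (W⁻¹)ᴴ := by
            simp only [Matrix.mul_assoc]
        _ = W⁻¹ * Matrix.diagonal d * (W⁻¹)ᴴ := by rw [hdiagr]
    rw [h1, hdiag, Matrix.conjTranspose_nonsing_inv]
    symm
    calc W⁻¹ * (W * A * Wᴴ) * Wᴴ⁻¹
        = (W⁻¹ * W) * A * (Wᴴ * Wᴴ⁻¹) := by simp only [Matrix.mul_assoc]
      _ = A := by
          rw [Matrix.inv_mul_of_invertible, Matrix.mul_inv_of_invertible]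
          simp

lemma perm_eq_one_of_le {π : Equiv.Perm (Fin n)} (h : ∀ i, π i ≤ i) : π = 1 := by
  have hsum : ∑ i : Fin n, ((π i : ℕ)) = ∑ i : Fin n, (i : ℕ) :=
    Equiv.sum_comp π (fun i => (i : ℕ))
  have hall := (Finset.sum_eq_sum_iff_of_le (fun i _ => by
    exact_mod_cast Fin.le_def.mp (h i))).mp hsum
  refine Equiv.ext fun i => ?_
  exact Fin.ext (hall i (Finset.mem_univ i))

lemma finrank_ne_zero_of_simple {G : Type} [Group G] (V : FDRep ℂ G) [Simple V] :
    Module.finrank ℂ V ≠ 0 := by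
  intro h
  have hsub : Subsingleton V := Module.finrank_zero_iff.mp h
  apply CategoryTheory.id_nonzero V
  apply Action.Hom.ext
  ext x
  exact @Subsingleton.elim _ hsub _ _

lemma posDef_of_posSemidef_det_ne_zero {A : Matrix (Fin n) (Fin n) ℂ}
    (hA : A.PosSemidef) (h : A.det ≠ 0) : A.PosDef := by
  refine posDef_iff_dotProduct_mulVec.mpr ⟨hA.1, fun x hx => lt_of_le_of_ne (hA.dotProduct_mulVec_nonneg x) (Ne.symm fun h0 => hx ?_)⟩
  have hAx : A *ᵥ x = 0 := (hA.dotProduct_mulVec_zero_iff x).mp h0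
  have : A⁻¹ *ᵥ (A *ᵥ x) = x := by
    rw [Matrix.mulVec_mulVec, Matrix.nonsing_inv_mul A (isUnit_iff_ne_zero.mpr h),
      Matrix.one_mulVec]
  rw [← this, hAx, Matrix.mulVec_zero]

end SchurAux

/-- Schur's inequality: for a positive semidefinite `A ∈ M_n(ℂ)`, a finite subgroup
`G ≤ Sₙ` and an irreducible character `χ` of `G`, `(1/χ(e)) d^G_χ(A) ≥ det A`. -/
theorem stmt_12 {n : ℕ} (A : Matrix (Fin n) (Fin n) ℂ) (hA : A.PosSemidef)
    (G : Subgroup (Equiv.Perm (Fin n))) [Fintype G]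
    (V : FDRep ℂ G) [Simple V] :
    A.det ≤ (V.character 1)⁻¹ *
      ∑ g : G, V.character g * ∏ i, A i ((g : Equiv.Perm (Fin n)) i) := by
  classical
  open SchurAux in
  set m := Module.finrank ℂ V with hmdef
  obtain ⟨N, hmul, hNinv, htr⟩ := exists_unitary V
  have hm0 : m ≠ 0 := finrank_ne_zero_of_simple V
  have hm1 : V.character 1 = (m : ℂ) := FDRep.char_one V
  have hmne : ((m : ℂ)) ≠ 0 := Nat.cast_ne_zero.mpr hm0
  set D := ∑ g : G, V.character g * ∏ i, A i ((g : Equiv.Perm (Fin n)) i) with hD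
  suffices h : (m : ℂ) * A.det ≤ D by
    have hminv : 0 ≤ ((m : ℂ))⁻¹ := by
      have h1 : ((m : ℂ)) = (((m : ℝ)) : ℂ) := by norm_cast
      rw [h1, ← Complex.ofReal_inv]
      exact Complex.zero_le_real.mpr (by positivity)
    have h2 : A.det = (m : ℂ)⁻¹ * ((m : ℂ) * A.det) := by
      rw [← mul_assoc, inv_mul_cancel₀ hmne, one_mul]
    rw [hm1, h2]
    exact mul_le_mul_of_nonneg_left h hminv
  by_cases hdet : A.det = 0
  · -- degenerate case: only nonnegativity is needed
    rw [hdet, mul_zero]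
    obtain ⟨B, hB⟩ : ∃ B : Matrix (Fin n) (Fin n) ℂ, A = Matrix.conjTranspose B * B := by
      open scoped MatrixOrder in exact CStarAlgebra.nonneg_iff_eq_star_mul_self.mp hA.nonneg
    have hexp : D = Phi G (fun g => (N g).trace)
        (fun f => ∏ i, B (f i) i) (fun f => ∏ i, B (f i) i) := by
      rw [hD, Phi]
      refine Finset.sum_congr rfl fun g _ => ?_
      rw [htr g, prod_expand hB ((g : Equiv.Perm (Fin n)))]
    rw [hexp]
    exact phi_nonneg G N hmul hNinv _
  · have hApd : A.PosDef := posDef_of_posSemidef_det_ne_zero hA hdet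
    obtain ⟨B, hBtri, hB⟩ := exists_triangular hApd
    set t : (Fin n → Fin n) → ℂ := fun f => ∏ i, B (f i) i with ht
    have hexp : D = Phi G (fun g => (N g).trace) t t := by
      rw [hD, Phi]
      refine Finset.sum_congr rfl fun g _ => ?_
      rw [htr g, prod_expand hB ((g : Equiv.Perm (Fin n)))]
    set u : (Fin n → Fin n) → ℂ :=
      fun f => if f = (id : Fin n → Fin n) then t id else 0 with hu
    set w : (Fin n → Fin n) → ℂ := t - u with hwdef
    have htuw : t = u + w := by
      funext f
      simp [hwdef]
    -- t vanishes on nontrivial permutations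
    have htperm : ∀ π : Equiv.Perm (Fin n), π ≠ 1 → t ⇑π = 0 := by
      intro π hπ
      have hnle : ¬ (∀ i, π i ≤ i) := fun hle => hπ (perm_eq_one_of_le hle)
      push_neg at hnle
      obtain ⟨i, hi⟩ := hnle
      exact Finset.prod_eq_zero (Finset.mem_univ i) (hBtri _ _ hi)
    have hw0 : ∀ g : G, w ⇑((g : Equiv.Perm (Fin n))) = 0 := by
      intro g
      by_cases hg1 : (g : Equiv.Perm (Fin n)) = 1
      · have : ⇑((g : Equiv.Perm (Fin n))) = (id : Fin n → Fin n) := by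
          rw [hg1]; rfl
        simp [hwdef, hu, this]
      · have hne : ⇑((g : Equiv.Perm (Fin n))) ≠ (id : Fin n → Fin n) := by
          intro hcon
          apply hg1
          apply Equiv.coe_fn_injective
          exact hcon.trans Equiv.Perm.coe_one.symm
        simp [hwdef, hu, hne, htperm _ hg1]
    have hPuw : Phi G (fun g => (N g).trace) u w = 0 := by
      rw [Phi]
      refine Finset.sum_eq_zero fun σ _ => ?_
      rw [mul_eq_zero]; right
      refine Finset.sum_eq_zero fun f _ => ?_
      by_cases hf : f = (id : Fin n → Fin n)
      · have : w (f ∘ ⇑((σ : Equiv.Perm (Fin n))⁻¹)) = 0 := by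
          rw [hf, Function.id_comp]
          have h3 : ⇑((σ : Equiv.Perm (Fin n))⁻¹) = ⇑(((σ⁻¹ : G) : Equiv.Perm (Fin n))) := by
            simp
          rw [h3]
          exact hw0 σ⁻¹
        rw [this, mul_zero]
      · have : u f = 0 := by simp [hu, hf]
        rw [this, star_zero, zero_mul]
    have hPwu : Phi G (fun g => (N g).trace) w u = 0 := by
      rw [Phi]
      refine Finset.sum_eq_zero fun σ _ => ?_
      rw [mul_eq_zero]; right
      refine Finset.sum_eq_zero fun f _ => ?_
      by_cases hf : f = ⇑((σ : Equiv.Perm (Fin n)))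
      · have : w f = 0 := by rw [hf]; exact hw0 σ
        rw [this, star_zero, zero_mul]
      · have hne : f ∘ ⇑((σ : Equiv.Perm (Fin n))⁻¹) ≠ (id : Fin n → Fin n) := by
          intro hcon
          apply hf
          funext x
          have := congrFun hcon (((σ : Equiv.Perm (Fin n))) x)
          simpa using this
        have : u (f ∘ ⇑((σ : Equiv.Perm (Fin n))⁻¹)) = 0 := by simp only [hu]; exact if_neg hne
        rw [this, mul_zero]
    have hPuu : Phi G (fun g => (N g).trace) u u
        = (m : ℂ) * (star (t id) * t id) := by
      rw [Phi]
      have hinner : ∀ σ : G,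
          ∑ f : Fin n → Fin n, star (u f) * u (f ∘ ⇑((σ : Equiv.Perm (Fin n))⁻¹))
            = star (t id) * u (⇑((σ : Equiv.Perm (Fin n))⁻¹)) := by
        intro σ
        rw [Finset.sum_eq_single (id : Fin n → Fin n)]
        · have hid : u (id : Fin n → Fin n) = t id := by simp [hu]
          rw [Function.id_comp, hid]
        · intro f _ hf
          have : u f = 0 := by simp [hu, hf]
          rw [this, star_zero, zero_mul]
        · intro habs
          exact absurd (Finset.mem_univ _) habs
      calc ∑ σ : G, (N σ).trace *
            ∑ f : Fin n → Fin n, star (u f) * u (f ∘ ⇑((σ : Equiv.Perm (Fin n))⁻¹))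
          = ∑ σ : G, (N σ).trace * (star (t id) * u (⇑((σ : Equiv.Perm (Fin n))⁻¹))) := by
            exact Finset.sum_congr rfl fun σ _ => by rw [hinner σ]
        _ = (m : ℂ) * (star (t id) * t id) := by
            rw [Finset.sum_eq_single (1 : G)]
            · have h1 : ⇑(((1 : G) : Equiv.Perm (Fin n))⁻¹) = (id : Fin n → Fin n) := by
                simp
              rw [h1]
              have h2 : u (id : Fin n → Fin n) = t id := by simp [hu]
              rw [h2, htr 1, hm1]
            · intro σ _ hσ
              have hne : ⇑((σ : Equiv.Perm (Fin n))⁻¹) ≠ (id : Fin n → Fin n) := by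
                intro hcon
                apply hσ
                have h4 : ((σ : Equiv.Perm (Fin n))⁻¹) = 1 := by
                  apply Equiv.coe_fn_injective
                  exact hcon.trans Equiv.Perm.coe_one.symm
                have h5 : ((σ : Equiv.Perm (Fin n))) = 1 := by
                  rw [← inv_inv ((σ : Equiv.Perm (Fin n))), h4]; simp
                exact Subtype.ext h5
              have : u (⇑((σ : Equiv.Perm (Fin n))⁻¹)) = 0 := by simp only [hu]; exact if_neg hne
              rw [this, mul_zero, mul_zero]
            · intro habs
              exact absurd (Finset.mem_univ _) habs
    have hdetA : star (t id) * t id = A.det := by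
      have hBdet : B.det = ∏ i, B i i := by
        apply Matrix.det_of_upperTriangular
        intro i j hij
        exact hBtri i j hij
      have htid : t id = B.det := by
        rw [hBdet]
        rfl
      rw [htid, hB, Matrix.det_mul, Matrix.det_conjTranspose]
    have hPww : 0 ≤ Phi G (fun g => (N g).trace) w w := phi_nonneg G N hmul hNinv w
    have hsplit : D = (m : ℂ) * A.det + Phi G (fun g => (N g).trace) w w := by
      rw [hexp, htuw, Phi_add_left, Phi_add_right, Phi_add_right, hPuw, hPwu, hPuu, hdetA]
      ring
    rw [hsplit]
    exact le_add_of_nonneg_right hPww
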